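/- If h : ℝ → ℝ is smooth (at least C^5) near x_i and f_j denotes the cell average (1/Δx)∫_{x_j - Δx/2}^{x_j + Δx/2} h(ξ)dξ for j = i-1, i, i+1, i+2, then -(1/12)f_{i-1} + (7/12)f_i + (7/12)f_{i+1} - (1/12)f_{i+2} = h(x_{i+1/2}) - (1/30)h^{(4)}(x_i)Δx^4 + O(Δx^5) as Δx → 0. -/

import Mathlib

open Asymptotics intervalIntegral

open Filter

lemma taylor_isBigO' (n : ℕ) : ∀ {f : ℝ → ℝ} {a : ℝ}, ContDiffAt ℝ (n+1) f a →
    (fun x => f x - ∑ k ∈ Finset.range (n+1),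
        iteratedDeriv k f a / (Nat.factorial k) * (x - a)^k)
      =O[nhds a] fun x => (x - a)^(n+1) := by
  induction n with
  | zero =>
    intro f a hf
    have h1 := (hf.differentiableAt (by simp)).isBigO_sub
    simpa using h1
  | succ n IH =>
    intro f a hf
    obtain ⟨u, hu, hfu⟩ := hf.contDiffOn le_rfl (by simp)
    obtain ⟨ε, hε, hball⟩ := Metric.mem_nhds_iff.1 hu
    have hfb : ContDiffOn ℝ ((n+1:ℕ) + 1) f (Metric.ball a ε) := by
      have := hfu.mono hball
      exact_mod_cast this
    have hsplit := (contDiffOn_succ_iff_deriv_of_isOpen Metric.isOpen_ball).1 hfb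
    have hdiff : DifferentiableOn ℝ f (Metric.ball a ε) := hsplit.1
    have hg : ContDiffAt ℝ (n+1) (deriv f) a :=
      (hsplit.2.2).contDiffAt (Metric.isOpen_ball.mem_nhds (Metric.mem_ball_self hε))
    obtain ⟨C, hC0, hCO⟩ := (IH hg).exists_nonneg
    obtain ⟨ε2, hε2, hC2⟩ := Metric.eventually_nhds_iff.1 hCO.bound
    have hsum : ∀ t : ℝ,
        (∑ k ∈ Finset.range (n+1+1),
          iteratedDeriv k f a / (Nat.factorial k) * ((k:ℝ) * (t - a)^(k-1)))
        = ∑ k ∈ Finset.range (n+1),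
          iteratedDeriv k (deriv f) a / (Nat.factorial k) * (t - a)^k := by
      intro t
      rw [Finset.sum_range_succ']
      simp only [Nat.cast_zero, zero_mul, mul_zero, add_zero]
      refine Finset.sum_congr rfl fun j _ => ?_
      rw [show j + 1 - 1 = j from rfl, ← iteratedDeriv_succ', Nat.factorial_succ]
      push_cast
      have hj : (Nat.factorial j : ℝ) ≠ 0 := Nat.cast_ne_zero.2 (Nat.factorial_ne_zero j)
      field_simp
    have hT : ∀ t : ℝ, HasDerivAt
        (fun x => ∑ k ∈ Finset.range (n+1+1),
          iteratedDeriv k f a / (Nat.factorial k) * (x - a)^k)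
        (∑ k ∈ Finset.range (n+1),
          iteratedDeriv k (deriv f) a / (Nat.factorial k) * (t - a)^k) t := by
      intro t
      rw [← hsum t]
      apply HasDerivAt.fun_sum
      intro k _
      have h2 : HasDerivAt (fun x : ℝ => (x-a)^k) ((k:ℝ) * (t-a)^(k-1) * 1) t :=
        (hasDerivAt_pow k (t-a)).comp t ((hasDerivAt_id t).sub_const a)
      simpa using h2.const_mul (iteratedDeriv k f a / (Nat.factorial k))
    rw [isBigO_iff]
    refine ⟨C, Metric.eventually_nhds_iff.2 ⟨min ε ε2, lt_min hε hε2, ?_⟩⟩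
    intro x hx
    set T : ℝ → ℝ := fun x => ∑ k ∈ Finset.range (n+1+1),
          iteratedDeriv k f a / (Nat.factorial k) * (x - a)^k with hTdef
    set S : ℝ → ℝ := fun t => ∑ k ∈ Finset.range (n+1),
          iteratedDeriv k (deriv f) a / (Nat.factorial k) * (t - a)^k with hSdef
    have hsub : Metric.closedBall a (dist x a) ⊆ Metric.ball a ε := by
      intro t ht
      simp only [Metric.mem_closedBall] at ht
      exact Metric.mem_ball.2 (lt_of_le_of_lt ht (lt_of_lt_of_le hx (min_le_left _ _)))
    have key : ‖(fun y => f y - T y) x - (fun y => f y - T y) a‖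
        ≤ (C * |x - a|^(n+1)) * ‖x - a‖ := by
      refine Convex.norm_image_sub_le_of_norm_hasDerivWithin_le
        (f := fun y => f y - T y) (f' := fun t => deriv f t - S t)
        (s := Metric.closedBall a (dist x a)) ?_ ?_
        (convex_closedBall a (dist x a))
        (Metric.mem_closedBall_self dist_nonneg)
        (Metric.mem_closedBall.2 (by simp [dist_comm]))
      · intro t ht
        have htb := hsub ht
        have hft : HasDerivAt f (deriv f t) t :=
          ((hdiff t htb).differentiableAt (Metric.isOpen_ball.mem_nhds htb)).hasDerivAt
        exact (hft.sub (hT t)).hasDerivWithinAt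
      · intro t ht
        have ht' : |t - a| ≤ |x - a| := by
          simpa [Real.dist_eq] using (Metric.mem_closedBall.1 ht)
        have ht2 : dist t a < ε2 :=
          lt_of_le_of_lt (Metric.mem_closedBall.1 ht)
            (lt_of_lt_of_le hx (min_le_right _ _))
        calc ‖deriv f t - S t‖ ≤ C * ‖(t - a)^(n+1)‖ := hC2 ht2
          _ ≤ C * |x - a|^(n+1) := by
              rw [Real.norm_eq_abs, abs_pow]
              exact mul_le_mul_of_nonneg_left (pow_le_pow_left₀ (abs_nonneg _) ht' _) hC0
    have hTa : T a = f a := by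
      rw [hTdef]
      show (∑ k ∈ Finset.range (n+1+1),
        iteratedDeriv k f a / (Nat.factorial k) * (a - a)^k) = f a
      rw [Finset.sum_range_succ']
      simp [iteratedDeriv_zero]
    simp only [hTa, sub_self, sub_zero] at key
    calc ‖f x - T x‖ ≤ (C * |x - a|^(n+1)) * ‖x - a‖ := key
      _ = C * ‖(x - a)^(n+1+1)‖ := by
          rw [Real.norm_eq_abs, Real.norm_eq_abs, abs_pow, pow_succ]; ring

/-- Cell average of `h` over the cell of width `Δx` centered at `x`. -/
noncomputable def cellAvg (h : ℝ → ℝ) (Δx x : ℝ) : ℝ :=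
  (1 / Δx) * ∫ ξ in (x - Δx / 2)..(x + Δx / 2), h ξ

set_option maxHeartbeats 2000000 in
theorem stmt_2 (h : ℝ → ℝ) (xi : ℝ) (hh : ContDiffAt ℝ 5 h xi) :
    (fun Δx : ℝ =>
        (-(1/12) * cellAvg h Δx (xi - Δx) + (7/12) * cellAvg h Δx xi +
          (7/12) * cellAvg h Δx (xi + Δx) - (1/12) * cellAvg h Δx (xi + 2 * Δx)) -
        (h (xi + Δx / 2) - (1/30) * iteratedDeriv 4 h xi * Δx ^ 4))
      =O[nhdsWithin (0:ℝ) (Set.Ioi 0)] (fun Δx : ℝ => Δx ^ 5) := by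
  obtain ⟨u, hu, hfu⟩ := hh.contDiffOn le_rfl (by simp)
  obtain ⟨ε, hε, hball⟩ := Metric.mem_nhds_iff.1 hu
  have hcont : ContinuousOn h (Metric.ball xi ε) :=
    (hfu.mono hball).continuousOn
  set H : ℝ → ℝ := fun x => ∫ t in xi..x, h t with hHdef
  have hint : ∀ y ∈ Metric.ball xi ε, IntervalIntegrable h MeasureTheory.volume xi y := by
    intro y hy
    exact (hcont.mono ((convex_ball xi ε).ordConnected.uIcc_subset
      (Metric.mem_ball_self hε) hy)).intervalIntegrable
  have hHd : ∀ x ∈ Metric.ball xi ε, HasDerivAt H (h x) x := by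
    intro x hx
    exact integral_hasDerivAt_right (hint x hx)
      (hcont.stronglyMeasurableAtFilter Metric.isOpen_ball x hx)
      ((hcont x hx).continuousAt (Metric.isOpen_ball.mem_nhds hx))
  have hHdiff : DifferentiableOn ℝ H (Metric.ball xi ε) :=
    fun x hx => ((hHd x hx).differentiableAt).differentiableWithinAt
  have hderiv : ∀ x ∈ Metric.ball xi ε, deriv H x = h x := fun x hx => (hHd x hx).deriv
  have hH6 : ContDiffOn ℝ ((5:ℕ)+1) H (Metric.ball xi ε) := by
    rw [contDiffOn_succ_iff_deriv_of_isOpen Metric.isOpen_ball]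
    refine ⟨hHdiff, by simp, ?_⟩
    exact (hfu.mono hball).congr hderiv
  have hH6at : ContDiffAt ℝ ((5:ℕ)+1) H xi :=
    hH6.contDiffAt (Metric.isOpen_ball.mem_nhds (Metric.mem_ball_self hε))
  have hdev : deriv H =ᶠ[nhds xi] h :=
    Filter.eventuallyEq_of_mem (Metric.isOpen_ball.mem_nhds (Metric.mem_ball_self hε)) hderiv
  have hHk : ∀ k : ℕ, iteratedDeriv (k+1) H xi = iteratedDeriv k h xi := by
    intro k
    rw [iteratedDeriv_succ']
    exact Filter.EventuallyEq.iteratedDeriv_eq k hdev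
  have hH0 : H xi = 0 := integral_same
  set d0 := iteratedDeriv 0 h xi with hd0
  set d1 := iteratedDeriv 1 h xi with hd1
  set d2 := iteratedDeriv 2 h xi with hd2
  set d3 := iteratedDeriv 3 h xi with hd3
  set d4 := iteratedDeriv 4 h xi with hd4
  have hP : ∀ y : ℝ, (∑ k ∈ Finset.range (5+1),
      iteratedDeriv k H xi / (Nat.factorial k) * y^k)
      = d0 * y + d1/2 * y^2 + d2/6 * y^3 + d3/24 * y^4 + d4/120 * y^5 := by
    intro y
    have e1 : iteratedDeriv 1 H xi = d0 := hHk 0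
    have e2 : iteratedDeriv 2 H xi = d1 := hHk 1
    have e3 : iteratedDeriv 3 H xi = d2 := hHk 2
    have e4 : iteratedDeriv 4 H xi = d3 := hHk 3
    have e5 : iteratedDeriv 5 H xi = d4 := hHk 4
    simp [Finset.sum_range_succ, e1, e2, e3, e4, e5, iteratedDeriv_zero, hH0,
      Nat.factorial]
    try ring
  have hQ : ∀ y : ℝ, (∑ k ∈ Finset.range (4+1),
      iteratedDeriv k h xi / (Nat.factorial k) * y^k)
      = d0 + d1 * y + d2/2 * y^2 + d3/6 * y^3 + d4/24 * y^4 := by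
    intro y
    simp [Finset.sum_range_succ, iteratedDeriv_zero, ← hd0, ← hd1, ← hd2, ← hd3, ← hd4,
      Nat.factorial]
    try ring
  -- Big-O for the antiderivative remainders
  have hR : ∀ c : ℝ, (fun Δx : ℝ => H (xi + c*Δx) -
      (d0 * (c*Δx) + d1/2 * (c*Δx)^2 + d2/6 * (c*Δx)^3 + d3/24 * (c*Δx)^4
        + d4/120 * (c*Δx)^5)) =O[nhds (0:ℝ)] fun Δx => Δx^6 := by
    intro c
    have hmap : Tendsto (fun Δx : ℝ => xi + c*Δx) (nhds 0) (nhds xi) := by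
      have hcc : Continuous fun Δx : ℝ => xi + c*Δx := by continuity
      exact hcc.tendsto' 0 xi (by simp)
    have h1 := (taylor_isBigO' 5 hH6at).comp_tendsto hmap
    simp only [Function.comp_def, add_sub_cancel_left] at h1
    have h2 : (fun Δx : ℝ => (c*Δx)^6) =O[nhds (0:ℝ)] fun Δx => Δx^6 := by
      exact (isBigO_const_mul_self (c^6) (fun Δx : ℝ => Δx^6) (nhds (0:ℝ))).congr_left
        (fun x => by ring)
    exact (h1.congr (fun x => by rw [hP]) (fun x => rfl)).trans h2
  -- Big-O for the point-value remainder
  have hrh : (fun Δx : ℝ => h (xi + (1/2)*Δx) -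
      (d0 + d1 * ((1/2)*Δx) + d2/2 * ((1/2)*Δx)^2 + d3/6 * ((1/2)*Δx)^3
        + d4/24 * ((1/2)*Δx)^4)) =O[nhds (0:ℝ)] fun Δx => Δx^5 := by
    have hmap : Tendsto (fun Δx : ℝ => xi + (1/2)*Δx) (nhds 0) (nhds xi) := by
      have hcc : Continuous fun Δx : ℝ => xi + (1/2)*Δx := by continuity
      exact hcc.tendsto' 0 xi (by simp)
    have hc5 : ContDiffAt ℝ ((4:ℕ)+1) h xi := by exact_mod_cast hh
    have h1 := (taylor_isBigO' 4 hc5).comp_tendsto hmap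
    simp only [Function.comp_def, add_sub_cancel_left] at h1
    have h2 : (fun Δx : ℝ => ((1/2)*Δx)^5) =O[nhds (0:ℝ)] fun Δx => Δx^5 := by
      exact (isBigO_const_mul_self ((1/2:ℝ)^5) (fun Δx : ℝ => Δx^5) (nhds (0:ℝ))).congr_left
        (fun x => by ring)
    exact (h1.congr (fun x => by rw [hQ]) (fun x => rfl)).trans h2
  have hcomb := ((((hR (-(3:ℝ)/2)).const_mul_left (1/12)).sub
      ((hR (-(1:ℝ)/2)).const_mul_left (2/3))).add
      ((hR ((3:ℝ)/2)).const_mul_left (2/3))).sub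
      ((hR ((5:ℝ)/2)).const_mul_left (1/12))
  have hmul := (isBigO_refl (fun Δx : ℝ => 1/Δx)
      (nhdsWithin (0:ℝ) (Set.Ioi 0))).mul (hcomb.mono nhdsWithin_le_nhds)
  have hev : (fun Δx : ℝ => (1/Δx) * Δx^6) =ᶠ[nhdsWithin (0:ℝ) (Set.Ioi 0)]
      fun Δx => Δx^5 := by
    filter_upwards [self_mem_nhdsWithin] with x hx
    have hx0 : x ≠ 0 := ne_of_gt hx
    field_simp
  have hG := (hmul.congr' EventuallyEq.rfl hev).sub (hrh.mono nhdsWithin_le_nhds)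
  refine Filter.EventuallyEq.trans_isBigO ?_ hG
  have hδ : (0:ℝ) < ε/4 := by positivity
  filter_upwards [Ioo_mem_nhdsGT_of_mem (Set.mem_Ico.2 ⟨le_refl (0:ℝ), hδ⟩)] with Δx hΔx
  obtain ⟨h0, h4⟩ := hΔx
  have hmem : ∀ c : ℝ, |c| ≤ 3 → ∀ y : ℝ, y = xi + c*Δx → y ∈ Metric.ball xi ε := by
    intro c hc y hy
    rw [Metric.mem_ball, hy, Real.dist_eq,
      show xi + c*Δx - xi = c*Δx by ring, abs_mul, abs_of_pos h0]
    nlinarith [abs_nonneg c]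
  have hcell : ∀ x : ℝ, x - Δx/2 ∈ Metric.ball xi ε → x + Δx/2 ∈ Metric.ball xi ε →
      cellAvg h Δx x = (1/Δx) * (H (x + Δx/2) - H (x - Δx/2)) := by
    intro x hx1 hx2
    rw [cellAvg]
    congr 1
    rw [hHdef]
    exact (integral_interval_sub_left (hint _ hx2) (hint _ hx1)).symm

  rw [hcell (xi - Δx) (hmem (-(3:ℝ)/2) (by rw [abs_le]; constructor <;> norm_num) _ (by ring))
        (hmem (-(1:ℝ)/2) (by rw [abs_le]; constructor <;> norm_num) _ (by ring)),
      hcell xi (hmem (-(1:ℝ)/2) (by rw [abs_le]; constructor <;> norm_num) _ (by ring))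
        (hmem ((1:ℝ)/2) (by rw [abs_le]; constructor <;> norm_num) _ (by ring)),
      hcell (xi + Δx) (hmem ((1:ℝ)/2) (by rw [abs_le]; constructor <;> norm_num) _ (by ring))
        (hmem ((3:ℝ)/2) (by rw [abs_le]; constructor <;> norm_num) _ (by ring)),
      hcell (xi + 2*Δx) (hmem ((3:ℝ)/2) (by rw [abs_le]; constructor <;> norm_num) _ (by ring))
        (hmem ((5:ℝ)/2) (by rw [abs_le]; constructor <;> norm_num) _ (by ring))]
  rw [show xi - Δx - Δx/2 = xi + (-(3:ℝ)/2) * Δx by ring,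
      show xi - Δx + Δx/2 = xi + (-(1:ℝ)/2) * Δx by ring,
      show xi + Δx - Δx/2 = xi + (1/2 : ℝ) * Δx by ring,
      show xi + Δx + Δx/2 = xi + ((3:ℝ)/2) * Δx by ring,
      show xi + 2*Δx - Δx/2 = xi + ((3:ℝ)/2) * Δx by ring,
      show xi + 2*Δx + Δx/2 = xi + ((5:ℝ)/2) * Δx by ring,
      show xi - Δx/2 = xi + (-(1:ℝ)/2) * Δx by ring,
      show xi + Δx/2 = xi + (1/2 : ℝ) * Δx by ring]
  have hΔ0 : Δx ≠ 0 := ne_of_gt h0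
  field_simp
  ring
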